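/- Let x* be a second-order stationary point of F(x)=f(x)+λ‖x‖_p^p, i.e. (X*)ᵀ∇²f(x*)X* + λp(p−1)Diag(|x*|^p) ⪰ 0, where f is twice continuously differentiable near x* and ∇f is L_f-Lipschitz on ℝⁿ. Then every nonzero entry x*_i satisfies |x*_i| ≥ (λp(1−p)/L_f)^{1/(2−p)}. -/

import Mathlib

/-- Lower bound on nonzero entries of second-order stationary points:
if (X*)ᵀ∇²f(x*)X* + λp(p-1)Diag(|x*|^p) ⪰ 0, f is C² near x* and ∇f is
L_f-Lipschitz, then |x*_i| ≥ (λp(1-p)/L_f)^(1/(2-p)) for every nonzero x*_i. -/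
theorem stmt_10 (n : ℕ) (p lam Lf : ℝ) (hp : 0 < p) (hp1 : p < 1) (hlam : 0 < lam)
    (hLf : 0 < Lf) (f : EuclideanSpace ℝ (Fin n) → ℝ)
    (x : EuclideanSpace ℝ (Fin n)) (hf : ContDiffAt ℝ 2 f x)
    (hlip : ∀ a b : EuclideanSpace ℝ (Fin n), ‖gradient f a - gradient f b‖ ≤ Lf * ‖a - b‖)
    (hstat : ∀ v : Fin n → ℝ,
      0 ≤ (∑ i, ∑ j, v i *
            (x i * fderiv ℝ (fun y => fderiv ℝ f y (EuclideanSpace.single j 1)) x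
              (EuclideanSpace.single i 1) * x j) * v j) +
          lam * p * (p - 1) * ∑ i, |x i| ^ p * (v i) ^ 2) :
    ∀ i, x i ≠ 0 → (lam * p * (1 - p) / Lf) ^ ((1 : ℝ) / (2 - p)) ≤ |x i| := by
  intro i hi
  set e : EuclideanSpace ℝ (Fin n) := EuclideanSpace.single i 1 with he
  set g : EuclideanSpace ℝ (Fin n) → (EuclideanSpace ℝ (Fin n) →L[ℝ] ℝ) := fderiv ℝ f with hg
  have hgdiff : DifferentiableAt ℝ g x :=
    (hf.fderiv_right (m := 1) (le_refl 2)).differentiableAt one_ne_zero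
  -- Lipschitz bound on fderiv of f (from the gradient Lipschitz bound)
  have hfl : ∀ a b : EuclideanSpace ℝ (Fin n), ‖g a - g b‖ ≤ Lf * ‖a - b‖ := by
    intro a b
    have : gradient f a - gradient f b
        = (InnerProductSpace.toDual ℝ (EuclideanSpace ℝ (Fin n))).symm (g a - g b) := by
      simp [gradient, map_sub]; rfl
    have hn : ‖gradient f a - gradient f b‖ = ‖g a - g b‖ := by
      rw [this, LinearIsometryEquiv.norm_map]
    rw [← hn]; exact hlip a b
  have hnorm : ‖fderiv ℝ g x‖ ≤ Lf := by
    apply norm_fderiv_le_of_lip' ℝ hLf.le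
    filter_upwards with y using hfl y x
  -- the diagonal second derivative entry
  set A : ℝ := fderiv ℝ (fun y => fderiv ℝ f y e) x e with hA
  have hAeq : A = (fderiv ℝ g x e) e := by
    have : fderiv ℝ (fun y => g y e) x
        = (g x).comp (fderiv ℝ (fun _ => e) x) + (fderiv ℝ g x).flip e := by
      exact fderiv_clm_apply hgdiff (differentiableAt_const e)
    rw [hA, hg, this]
    simp; rfl
  have hAle : A ≤ Lf := by
    rw [hAeq]
    have h1 : ‖(fderiv ℝ g x e) e‖ ≤ ‖fderiv ℝ g x‖ * ‖e‖ * ‖e‖ :=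
      (fderiv ℝ g x).le_opNorm₂ e e
    have he1 : ‖e‖ = 1 := by
      rw [he, EuclideanSpace.norm_single]; simp
    calc (fderiv ℝ g x e) e ≤ ‖(fderiv ℝ g x e) e‖ := le_abs_self _
      _ ≤ ‖fderiv ℝ g x‖ * ‖e‖ * ‖e‖ := h1
      _ = ‖fderiv ℝ g x‖ := by rw [he1]; ring
      _ ≤ Lf := hnorm
  -- specialize the stationarity condition to v = e_i
  have hs := hstat (Pi.single i 1)
  have hsum : (∑ i', ∑ j', (Pi.single i 1 : Fin n → ℝ) i' *
      (x i' * fderiv ℝ (fun y => fderiv ℝ f y (EuclideanSpace.single j' 1)) x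
        (EuclideanSpace.single i' 1) * x j') * (Pi.single i 1 : Fin n → ℝ) j')
      = x i * A * x i := by
    rw [Finset.sum_eq_single i]
    · rw [Finset.sum_eq_single i]
      · simp [he]; exact Or.inl rfl
      · intro b _ hb; simp [Pi.single_apply, hb]
      · intro h; exact absurd (Finset.mem_univ i) h
    · intro b _ hb
      simp [Pi.single_apply, hb]
    · intro h; exact absurd (Finset.mem_univ i) h
  have hsum2 : (∑ i', |x i'| ^ p * ((Pi.single i 1 : Fin n → ℝ) i') ^ 2) = |x i| ^ p := by
    rw [Finset.sum_eq_single i]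
    · simp
    · intro b _ hb; simp [Pi.single_apply, hb]
    · intro h; exact absurd (Finset.mem_univ i) h
  rw [hsum, hsum2] at hs
  -- main inequality: lam * p * (1-p) * |x i|^p ≤ Lf * (x i)^2
  have habs : 0 < |x i| := abs_pos.mpr hi
  have hkey : lam * p * (1 - p) * |x i| ^ p ≤ Lf * (x i) ^ 2 := by
    have h1 : lam * p * (1 - p) * |x i| ^ p ≤ x i * A * x i := by nlinarith
    have h2 : x i * A * x i ≤ Lf * (x i) ^ 2 := by nlinarith [sq_nonneg (x i)]
    linarith
  have hsplit : (x i) ^ 2 = |x i| ^ p * |x i| ^ (2 - p) := by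
    rw [← Real.rpow_add habs]
    have : p + (2 - p) = (2 : ℝ) := by ring
    rw [this]
    rw [show ((2:ℝ)) = ((2:ℕ) : ℝ) by norm_num, Real.rpow_natCast, sq_abs]
  have hpow : lam * p * (1 - p) / Lf ≤ |x i| ^ (2 - p) := by
    rw [div_le_iff₀ hLf]
    have hxp : 0 < |x i| ^ p := Real.rpow_pos_of_pos habs p
    rw [hsplit] at hkey
    set t := |x i| ^ p with ht
    set s := |x i| ^ (2 - p) with hs2
    have h3 : (lam * p * (1 - p)) * t ≤ (s * Lf) * t := by
      calc (lam * p * (1 - p)) * t = lam * p * (1 - p) * t := by ring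
        _ ≤ Lf * (t * s) := hkey
        _ = (s * Lf) * t := by ring
    exact le_of_mul_le_mul_right h3 hxp
  have h2p : (0:ℝ) < 2 - p := by linarith
  have hbase : (0:ℝ) ≤ lam * p * (1 - p) / Lf := div_nonneg (mul_nonneg (mul_nonneg hlam.le hp.le) (by linarith)) hLf.le
  calc (lam * p * (1 - p) / Lf) ^ ((1:ℝ) / (2 - p))
      ≤ (|x i| ^ (2 - p)) ^ ((1:ℝ) / (2 - p)) := by
        exact Real.rpow_le_rpow hbase hpow (div_nonneg zero_le_one h2p.le)
    _ = |x i| := by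
        rw [← Real.rpow_mul habs.le, mul_one_div, div_self h2p.ne', Real.rpow_one]
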